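/- arXiv:2008.00284 — 3 statements merged into one kernel-verified Lean document; each statement's English description precedes it below -/
import Mathlib

section
/- For all nonnegative integers n, p (with p ≥ 1) and q: the poly-Bernoulli polynomial with negative upper index satisfies B_n^{(-p)}(q) = sum_{j=1}^p S(p,j) * (-1)^{p+j} * j! * (j+q+1)^n, where S(p,j) is the Stirling number of the second kind. -/
open Finset

/-- `harmonic m` is the `m`-th harmonic number `H_m = ∑_{k=1}^m 1/k`. -/
def harmonic' (m : ℕ) : ℚ := ∑ k ∈ Finset.range m, 1/(k+1 : ℚ)

/-- Hyperharmonic numbers: `hyperh r n = h_n^{(r)}` with `h_n^{(0)} = 1/n`. -/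
def hyperh : ℕ → ℕ → ℚ
  | 0, n => if n = 0 then 0 else 1/(n:ℚ)
  | r+1, n => ∑ k ∈ Finset.Icc 1 n, hyperh r k

/-- Generalized hyperharmonic numbers: `GH p r n = H_n^{(p,r)}` with `H_k^{(p,0)} = 1/k^p`. -/
def GH (p : ℤ) : ℕ → ℕ → ℚ
  | 0, n => if n = 0 then 0 else (n:ℚ)^(-p)
  | r+1, n => ∑ k ∈ Finset.Icc 1 n, GH p r k

/-- Generalized harmonic numbers `H_m^{(p)} = ∑_{j=1}^m 1/j^p`. -/
def genH (p m : ℕ) : ℚ := ∑ j ∈ Finset.Icc 1 m, 1/(j:ℚ)^p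

/-- Hyper-sums: `hS p q n = S_p^{(q)}(n)` with `S_p^{(0)}(n) = ∑_{k=1}^n k^p`. -/
def hS (p : ℕ) : ℕ → ℕ → ℕ
  | 0, n => ∑ k ∈ Finset.Icc 1 n, k^p
  | q+1, n => ∑ k ∈ Finset.Icc 1 n, hS p q k

/-- Stirling numbers of the second kind. -/
def stirling2 : ℕ → ℕ → ℕ
  | 0, 0 => 1
  | 0, _+1 => 0
  | _+1, 0 => 0
  | n+1, k+1 => (k+1) * stirling2 n (k+1) + stirling2 n k

/-- `r`-Stirling numbers of the second kind: `rstirling2 r n k = {n+r, k+r}_r`. -/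
def rstirling2 (r : ℕ) : ℕ → ℕ → ℕ
  | 0, 0 => 1
  | 0, _+1 => 0
  | n+1, 0 => r * rstirling2 r n 0
  | n+1, k+1 => (k+1+r) * rstirling2 r n (k+1) + rstirling2 r n k

/-- `r`-Stirling numbers of the first kind: `rstirling1 r n k = [n+r, k+r]_r`.
In particular `rstirling1 0 n k` is the unsigned Stirling number of the first kind. -/
def rstirling1 (r : ℕ) : ℕ → ℕ → ℕ
  | 0, 0 => 1
  | 0, _+1 => 0
  | n+1, 0 => (n+r) * rstirling1 r n 0
  | n+1, k+1 => (n+r) * rstirling1 r n (k+1) + rstirling1 r n k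

/-- Binomial coefficient with (possibly negative) integer upper argument. -/
def binomZ (x : ℤ) (k : ℕ) : ℚ :=
  (∏ i ∈ Finset.range k, ((x:ℚ) - i)) / (Nat.factorial k)

/-- Congruence of rationals mod `m`: `x ≡ y (mod m)` iff `m ∣ (x.num * y.den - y.num * x.den)`. -/
def ratMod (m : ℕ) (x y : ℚ) : Prop := (m:ℤ) ∣ (x.num * (y.den:ℤ) - y.num * (x.den:ℤ))

/-- Poly-Bernoulli numbers of negative index: `polyBN p n = B_n^{(-p)}`. -/
def polyBN (p n : ℕ) : ℤ :=
  (-1)^n * ∑ m ∈ Finset.range (n+1),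
    (stirling2 n m : ℤ) * (-1)^m * (Nat.factorial m : ℤ) * ((m:ℤ)+1)^p

/-- Poly-Bernoulli polynomial values of negative index: `polyBP p n q = B_n^{(-p)}(q)`. -/
def polyBP (p n q : ℕ) : ℤ :=
  ∑ j ∈ Finset.range (n+1), (n.choose j : ℤ) * polyBN p j * (q:ℤ)^(n-j)

def ffZ (x : ℤ) (j : ℕ) : ℤ := ∏ i ∈ Finset.range j, (x - i)

lemma stirling2_zero_right : ∀ p, stirling2 (p+1) 0 = 0 := fun _ => rfl

lemma stirling2_succ (n k : ℕ) :
    stirling2 (n+1) (k+1) = (k+1) * stirling2 n (k+1) + stirling2 n k := rfl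

lemma stirling2_eq_zero_of_lt : ∀ p j, p < j → stirling2 p j = 0 := by
  intro p
  induction p with
  | zero => intro j hj; match j, hj with | j+1, _ => rfl
  | succ p ih =>
    intro j hj
    match j, hj with
    | j+1, hj =>
      rw [stirling2_succ, ih (j+1) (by omega), ih j (by omega)]; ring

lemma pow_eq_sum_stirling (p : ℕ) (x : ℤ) :
    x ^ p = ∑ j ∈ range (p+1), (stirling2 p j : ℤ) * ffZ x j := by
  induction p with
  | zero => simp [ffZ, stirling2]
  | succ p ih =>
    have key : ∀ j : ℕ, x * ffZ x j = ffZ x (j+1) + j * ffZ x j := by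
      intro j
      have : ffZ x (j+1) = ffZ x j * (x - j) := Finset.prod_range_succ _ _
      rw [this]; ring
    have h1 : x ^ (p+1) = ∑ j ∈ range (p+1),
        ((stirling2 p j : ℤ) * ffZ x (j+1) + (j:ℤ) * ((stirling2 p j : ℤ) * ffZ x j)) := by
      rw [pow_succ, mul_comm, ih, Finset.mul_sum]
      apply Finset.sum_congr rfl
      intro j _
      rw [show x * ((stirling2 p j:ℤ) * ffZ x j) = (stirling2 p j:ℤ) * (x * ffZ x j) by ring, key j]; ring
    rw [h1, Finset.sum_add_distrib]
    rw [Finset.sum_range_succ' (fun j => (stirling2 (p+1) j : ℤ) * ffZ x j) (p+1)]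
    rw [stirling2_zero_right]
    rw [Nat.cast_zero, zero_mul, add_zero]
    have h2 : ∀ j ∈ range (p+1), (stirling2 (p+1) (j+1) : ℤ) * ffZ x (j+1)
        = ((j:ℤ)+1) * (stirling2 p (j+1) : ℤ) * ffZ x (j+1) + (stirling2 p j : ℤ) * ffZ x (j+1) := by
      intro j _
      rw [stirling2_succ]; push_cast; ring
    rw [Finset.sum_congr rfl h2, Finset.sum_add_distrib]
    have h3 : ∑ j ∈ range (p+1), (j:ℤ) * ((stirling2 p j : ℤ) * ffZ x j)
        = ∑ j ∈ range (p+1), ((j:ℤ)+1) * (stirling2 p (j+1) : ℤ) * ffZ x (j+1) := by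
      have := Finset.sum_range_succ' (fun j => (j:ℤ) * ((stirling2 p j : ℤ) * ffZ x j)) (p+1)
      rw [Finset.sum_range_succ (fun j => (j:ℤ) * ((stirling2 p j : ℤ) * ffZ x j)) (p+1)] at this
      rw [stirling2_eq_zero_of_lt p (p+1) (by omega)] at this
      simp at this
      rw [this]
      exact Finset.sum_congr rfl fun j _ => by ring
    rw [h3]; ring

lemma fact_mul_ffZ (m j : ℕ) :
    (Nat.factorial m : ℤ) * ffZ (-(m:ℤ)-1) j = (-1)^j * (Nat.factorial (m+j) : ℤ) := by
  induction j with
  | zero => simp [ffZ]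
  | succ j ih =>
    have h : ffZ (-(m:ℤ)-1) (j+1) = ffZ (-(m:ℤ)-1) j * (-(m:ℤ)-1-j) := Finset.prod_range_succ _ _
    rw [h, show (Nat.factorial m : ℤ) * (ffZ (-(m:ℤ)-1) j * (-(m:ℤ)-1-j)) =
      ((Nat.factorial m : ℤ) * ffZ (-(m:ℤ)-1) j) * (-(m:ℤ)-1-j) by ring, ih,
      show m + (j+1) = (m+j)+1 by omega, Nat.factorial_succ]
    push_cast; ring

lemma sumB (j : ℕ) : ∀ n, ∑ m ∈ range (n+1),
    (stirling2 n m : ℤ) * (-1)^(n+m) * (Nat.factorial (m+j) : ℤ)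
    = (Nat.factorial j : ℤ) * ((j:ℤ)+1)^n := by
  intro n
  induction n with
  | zero => simp [stirling2]
  | succ n ih =>
    rw [Finset.sum_range_succ' (fun m => (stirling2 (n+1) m : ℤ) * (-1)^(n+1+m) * (Nat.factorial (m+j) : ℤ)) (n+1)]
    rw [stirling2_zero_right, Nat.cast_zero, zero_mul, zero_mul, add_zero]
    have h2 : ∀ m ∈ range (n+1),
        (stirling2 (n+1) (m+1) : ℤ) * (-1)^(n+1+(m+1)) * (Nat.factorial (m+1+j) : ℤ)
        = ((m:ℤ)+1) * ((stirling2 n (m+1) : ℤ) * (-1)^(n+m) * (Nat.factorial (m+1+j) : ℤ))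
          + (stirling2 n m : ℤ) * (-1)^(n+m) * (Nat.factorial (m+1+j) : ℤ) := by
      intro m _
      rw [stirling2_succ]
      push_cast
      rw [show n+1+(m+1) = (n+m)+2 by omega, pow_add]
      ring
    rw [Finset.sum_congr rfl h2, Finset.sum_add_distrib]
    -- first sum equals -∑ m * S(n,m) * (-1)^(n+m) * (m+j)!
    have h3 : ∑ m ∈ range (n+1), ((m:ℤ)+1) * ((stirling2 n (m+1) : ℤ) * (-1)^(n+m) * (Nat.factorial (m+1+j) : ℤ))
        = - ∑ m ∈ range (n+1), (m:ℤ) * ((stirling2 n m : ℤ) * (-1)^(n+m) * (Nat.factorial (m+j) : ℤ)) := by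
      have key := Finset.sum_range_succ' (fun m => (m:ℤ) * ((stirling2 n m : ℤ) * (-1)^(n+m) * (Nat.factorial (m+j) : ℤ))) (n+1)
      rw [Finset.sum_range_succ (fun m => (m:ℤ) * ((stirling2 n m : ℤ) * (-1)^(n+m) * (Nat.factorial (m+j) : ℤ))) (n+1),
        stirling2_eq_zero_of_lt n (n+1) (by omega)] at key
      simp only [Nat.cast_zero, zero_mul, mul_zero, add_zero] at key
      rw [key]
      rw [← Finset.sum_neg_distrib]
      apply Finset.sum_congr rfl
      intro m _
      push_cast
      rw [show n+(m+1) = (n+m)+1 by omega, pow_succ]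
      ring
    rw [h3]
    -- combine: -(∑ m * a_m * (m+j)!) + ∑ a_m (m+1+j)! = (j+1) ∑ a_m (m+j)!
    have h4 : ∀ m ∈ range (n+1),
        (stirling2 n m : ℤ) * (-1)^(n+m) * (Nat.factorial (m+1+j) : ℤ)
        = (m:ℤ) * ((stirling2 n m : ℤ) * (-1)^(n+m) * (Nat.factorial (m+j) : ℤ))
          + ((j:ℤ)+1) * ((stirling2 n m : ℤ) * (-1)^(n+m) * (Nat.factorial (m+j) : ℤ)) := by
      intro m _
      rw [show m+1+j = (m+j)+1 by omega, Nat.factorial_succ]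
      push_cast; ring
    rw [Finset.sum_congr rfl h4, Finset.sum_add_distrib, ← Finset.mul_sum, ih]
    ring

lemma polyBN_eq (p n : ℕ) : polyBN p n
    = ∑ j ∈ range (p+1), (stirling2 p j : ℤ) * (-1)^(p+j) * (Nat.factorial j : ℤ) * ((j:ℤ)+1)^n := by
  unfold polyBN
  rw [Finset.mul_sum]
  have step : ∀ m ∈ range (n+1),
      (-1:ℤ)^n * ((stirling2 n m : ℤ) * (-1)^m * (Nat.factorial m : ℤ) * ((m:ℤ)+1)^p)
      = ∑ j ∈ range (p+1), (stirling2 p j : ℤ) * (-1)^(p+j)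
          * ((stirling2 n m : ℤ) * (-1)^(n+m) * (Nat.factorial (m+j) : ℤ)) := by
    intro m _
    have e1 : ((m:ℤ)+1)^p = (-1)^p * (-(m:ℤ)-1)^p := by
      rw [show (-(m:ℤ)-1) = (-1) * ((m:ℤ)+1) by ring, mul_pow, ← mul_assoc, ← mul_pow]
      norm_num
    have e2 : (Nat.factorial m : ℤ) * ((m:ℤ)+1)^p
        = ∑ j ∈ range (p+1), (stirling2 p j : ℤ) * ((-1:ℤ)^(p+j) * (Nat.factorial (m+j) : ℤ)) := by
      rw [e1, pow_eq_sum_stirling p (-(m:ℤ)-1), Finset.mul_sum, Finset.mul_sum]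
      apply Finset.sum_congr rfl
      intro j _
      rw [show (Nat.factorial m:ℤ) * ((-1:ℤ)^p * ((stirling2 p j:ℤ) * ffZ (-(m:ℤ)-1) j))
        = (-1:ℤ)^p * (stirling2 p j:ℤ) * ((Nat.factorial m:ℤ) * ffZ (-(m:ℤ)-1) j) by ring,
        fact_mul_ffZ, pow_add]
      ring
    rw [show (-1:ℤ)^n * ((stirling2 n m : ℤ) * (-1)^m * (Nat.factorial m : ℤ) * ((m:ℤ)+1)^p)
      = ((stirling2 n m:ℤ) * ((-1:ℤ)^n * (-1:ℤ)^m)) * ((Nat.factorial m:ℤ) * ((m:ℤ)+1)^p) by ring,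
      ← pow_add, e2, Finset.mul_sum]
    apply Finset.sum_congr rfl
    intro j _
    ring
  rw [Finset.sum_congr rfl step, Finset.sum_comm]
  apply Finset.sum_congr rfl
  intro j _
  rw [← Finset.mul_sum, sumB j n]
  ring

theorem stmt11 (n p q : ℕ) (hp : 1 ≤ p) :
    polyBP p n q = ∑ j ∈ Finset.Icc 1 p,
      (stirling2 p j : ℤ) * (-1:ℤ)^(p+j) * (Nat.factorial j : ℤ) * ((j:ℤ)+(q:ℤ)+1)^n := by
  have main : polyBP p n q = ∑ j ∈ range (p+1),
      (stirling2 p j : ℤ) * (-1:ℤ)^(p+j) * (Nat.factorial j : ℤ) * ((j:ℤ)+(q:ℤ)+1)^n := by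
    unfold polyBP
    have step : ∀ i ∈ range (n+1), (n.choose i : ℤ) * polyBN p i * (q:ℤ)^(n-i)
        = ∑ j ∈ range (p+1), (stirling2 p j : ℤ) * (-1:ℤ)^(p+j) * (Nat.factorial j : ℤ)
            * (((j:ℤ)+1)^i * (q:ℤ)^(n-i) * (n.choose i : ℤ)) := by
      intro i _
      rw [polyBN_eq, Finset.mul_sum, Finset.sum_mul]
      apply Finset.sum_congr rfl
      intro j _
      ring
    rw [Finset.sum_congr rfl step, Finset.sum_comm]
    apply Finset.sum_congr rfl
    intro j _
    rw [← Finset.mul_sum, ← add_pow ((j:ℤ)+1) (q:ℤ) n]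
    ring_nf
  rw [main, Finset.sum_range_succ' (fun j => (stirling2 p j : ℤ) * (-1:ℤ)^(p+j) * (Nat.factorial j : ℤ) * ((j:ℤ)+(q:ℤ)+1)^n) p]
  have h0 : stirling2 p 0 = 0 := by
    match p, hp with
    | p+1, _ => rfl
  rw [h0]
  simp only [Nat.cast_zero, zero_mul, add_zero]
  rw [← Finset.Ico_add_one_right_eq_Icc, Finset.sum_Ico_eq_sum_range]
  apply Finset.sum_congr (by rw [Nat.add_sub_cancel])
  intro i _
  rw [add_comm 1 i]
end

section
/- For all nonnegative integers n and p: (1/n!) * sum_{k=0}^n |s(n+1, k+1)| * B_p^{(-k)} = S_p(n+1), where |s(n+1,k+1)| is the unsigned Stirling number of the first kind, B_p^{(-k)} is the poly-Bernoulli number of negative index, and S_p(m) = sum_{j=1}^m j^p. -/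
open Finset

lemma stirling2_eq_zero : ∀ p m, p < m → stirling2 p m = 0
  | 0, _+1, _ => rfl
  | p+1, m+1, h => by
    have h1 := stirling2_eq_zero p (m+1) (by omega)
    have h2 := stirling2_eq_zero p m (by omega)
    simp [stirling2, h1, h2]

lemma rstirling1_zero_right : ∀ n, rstirling1 0 (n+1) 0 = 0
  | 0 => rfl
  | n+1 => by
    rw [show rstirling1 0 (n+1+1) 0 = (n+1+0) * rstirling1 0 (n+1) 0 from rfl,
      rstirling1_zero_right n, Nat.mul_zero]

lemma rstirling1_eq_zero : ∀ n k, n < k → rstirling1 0 n k = 0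
  | 0, _+1, _ => rfl
  | n+1, k+1, h => by
    have h1 := rstirling1_eq_zero n (k+1) (by omega)
    have h2 := rstirling1_eq_zero n k (by omega)
    simp [rstirling1, h1, h2]

def ascQ (x : ℚ) (m : ℕ) : ℚ := ∏ i ∈ range m, (x + i)

lemma factE : ∀ (b a : ℕ), (Nat.factorial a : ℚ) * ∏ i ∈ range b, ((a:ℚ)+1+i) = (Nat.factorial (a+b) : ℚ)
  | 0, a => by simp
  | b+1, a => by
    rw [prod_range_succ, ← mul_assoc, factE b a,
      show a+(b+1) = (a+b)+1 by omega, Nat.factorial_succ]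
    push_cast
    ring

lemma lemA (n : ℕ) : ∀ (x : ℚ), ∑ k ∈ range (n+1), (rstirling1 0 (n+1) (k+1) : ℚ) * x^k
    = ∏ i ∈ range n, (x + (i+1)) := by
  induction n with
  | zero => intro x; simp [rstirling1]
  | succ n ih =>
    intro x
    have step : ∀ k, (rstirling1 0 (n+2) (k+1) : ℚ)
        = (n+1) * (rstirling1 0 (n+1) (k+1) : ℚ) + (rstirling1 0 (n+1) k : ℚ) := by
      intro k
      have : rstirling1 0 (n+2) (k+1) = (n+1+0) * rstirling1 0 (n+1) (k+1) + rstirling1 0 (n+1) k := rfl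
      rw [this]; push_cast; ring
    calc ∑ k ∈ range (n+2), (rstirling1 0 (n+2) (k+1) : ℚ) * x^k
        = ∑ k ∈ range (n+2), ((n+1) * ((rstirling1 0 (n+1) (k+1) : ℚ) * x^k)
            + (rstirling1 0 (n+1) k : ℚ) * x^k) := by
          refine sum_congr rfl fun k _ => ?_; rw [step k]; ring
      _ = (n+1) * ∑ k ∈ range (n+2), (rstirling1 0 (n+1) (k+1) : ℚ) * x^k
            + ∑ k ∈ range (n+2), (rstirling1 0 (n+1) k : ℚ) * x^k := by
          rw [sum_add_distrib, mul_sum]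
      _ = (n+1) * ∑ k ∈ range (n+1), (rstirling1 0 (n+1) (k+1) : ℚ) * x^k
            + x * ∑ k ∈ range (n+1), (rstirling1 0 (n+1) (k+1) : ℚ) * x^k := by
          congr 1
          · rw [sum_range_succ, rstirling1_eq_zero (n+1) (n+2) (by omega)]
            simp
          · rw [sum_range_succ' (fun k => (rstirling1 0 (n+1) k : ℚ) * x^k) (n+1),
              rstirling1_zero_right n]
            simp [mul_sum]
            refine sum_congr rfl fun k _ => ?_
            ring
      _ = (x + (n+1)) * ∏ i ∈ range n, (x + (i+1)) := by rw [ih x]; ring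
      _ = ∏ i ∈ range (n+1), (x + (i+1)) := by rw [prod_range_succ]; push_cast; ring

lemma lemC (p : ℕ) : ∀ (x : ℚ), x^p
    = ∑ m ∈ range (p+1), (-1:ℚ)^(p+m) * (stirling2 p m : ℚ) * ascQ x m := by
  induction p with
  | zero => intro x; simp [ascQ, stirling2]
  | succ p ih =>
    intro x
    have hx : ∀ m, x * ascQ x m = ascQ x (m+1) - m * ascQ x m := by
      intro m
      rw [ascQ, ascQ, prod_range_succ]
      ring
    have h2 : ∑ m ∈ range (p+1), (-1:ℚ)^(p+m) * (stirling2 p m : ℚ) * (m * ascQ x m)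
        = ∑ m ∈ range (p+1), (-1:ℚ)^(p+(m+1)) * (stirling2 p (m+1) : ℚ) * (((m:ℚ)+1) * ascQ x (m+1)) := by
      have e1 : ∑ m ∈ range (p+2), (-1:ℚ)^(p+m) * (stirling2 p m : ℚ) * (m * ascQ x m)
          = ∑ m ∈ range (p+1), (-1:ℚ)^(p+m) * (stirling2 p m : ℚ) * (m * ascQ x m) := by
        rw [sum_range_succ, stirling2_eq_zero p (p+1) (by omega)]
        simp
      rw [← e1, sum_range_succ' (fun m => (-1:ℚ)^(p+m) * (stirling2 p m : ℚ) * (m * ascQ x m)) (p+1)]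
      simp only [Nat.cast_zero, zero_mul, mul_zero, add_zero]
      refine sum_congr rfl fun m _ => ?_
      push_cast
      ring
    calc x^(p+1) = x * x^p := by ring
      _ = ∑ m ∈ range (p+1), (-1:ℚ)^(p+m) * (stirling2 p m : ℚ) * (x * ascQ x m) := by
          rw [ih x, mul_sum]; refine sum_congr rfl fun m _ => ?_; ring
      _ = ∑ m ∈ range (p+1), ((-1:ℚ)^(p+m) * (stirling2 p m : ℚ) * ascQ x (m+1)
            - (-1:ℚ)^(p+m) * (stirling2 p m : ℚ) * (m * ascQ x m)) := by
          refine sum_congr rfl fun m _ => ?_; rw [hx m]; ring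
      _ = ∑ m ∈ range (p+1), ((-1:ℚ)^(p+m) * (stirling2 p m : ℚ) * ascQ x (m+1)
            - (-1:ℚ)^(p+(m+1)) * (stirling2 p (m+1) : ℚ) * (((m:ℚ)+1) * ascQ x (m+1))) := by
          rw [sum_sub_distrib, sum_sub_distrib, h2]
      _ = ∑ m ∈ range (p+1), (-1:ℚ)^(p+1+(m+1)) * (stirling2 (p+1) (m+1) : ℚ) * ascQ x (m+1) := by
          refine sum_congr rfl fun m _ => ?_
          have hs : stirling2 (p+1) (m+1) = (m+1) * stirling2 p (m+1) + stirling2 p m := rfl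
          have hp1 : (-1:ℚ)^(p+1+(m+1)) = (-1:ℚ)^(p+m) := by
            rw [show p+1+(m+1) = (p+m)+2 by ring, pow_add]; norm_num
          have hp2 : (-1:ℚ)^(p+(m+1)) = -(-1:ℚ)^(p+m) := by
            rw [show p+(m+1) = (p+m)+1 by ring, pow_succ]; ring
          rw [hs, hp1, hp2]; push_cast; ring
      _ = ∑ m ∈ range (p+2), (-1:ℚ)^(p+1+m) * (stirling2 (p+1) m : ℚ) * ascQ x m := by
          rw [sum_range_succ' (fun m => (-1:ℚ)^(p+1+m) * (stirling2 (p+1) m : ℚ) * ascQ x m) (p+1)]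
          have : stirling2 (p+1) 0 = 0 := rfl
          simp [this]

lemma lemB (m : ℕ) : ∀ (n : ℕ), (Nat.factorial m : ℚ) * ∏ i ∈ range n, ((m:ℚ)+2+i)
    = (Nat.factorial n : ℚ) * ∑ j ∈ Icc 1 (n+1), ascQ (j:ℚ) m := by
  intro n
  induction n with
  | zero =>
    simp only [range_zero, prod_empty, mul_one, Nat.factorial_zero, Nat.cast_one, one_mul,
      Nat.zero_add, Icc_self, sum_singleton, Nat.cast_one]
    have h := factE m 0
    rw [Nat.zero_add] at h
    rw [ascQ, ← h, Nat.factorial_zero, Nat.cast_one, one_mul]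
    refine prod_congr rfl fun i _ => by push_cast; ring
  | succ n ih =>
    have hstep : ∑ j ∈ Icc 1 (n+1+1), ascQ (j:ℚ) m
        = (∑ j ∈ Icc 1 (n+1), ascQ (j:ℚ) m) + ascQ ((n:ℚ)+2) m := by
      rw [Finset.sum_Icc_succ_top (by omega : 1 ≤ n+1+1)]
      norm_num
      congr 1
      push_cast
      ring
    have key : (Nat.factorial m : ℚ) * ((m:ℚ)+1) * ∏ i ∈ range n, ((m:ℚ)+2+i)
        = ((n:ℚ)+1) * (Nat.factorial n : ℚ) * ascQ ((n:ℚ)+2) m := by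
      have l1 := factE n (m+1)
      have l2 := factE m (n+1)
      have e1 : ∏ i ∈ range n, (((m+1:ℕ):ℚ)+1+i) = ∏ i ∈ range n, ((m:ℚ)+2+i) := by
        refine prod_congr rfl fun i _ => ?_; push_cast; ring
      have e2 : ∏ i ∈ range m, (((n+1:ℕ):ℚ)+1+i) = ascQ ((n:ℚ)+2) m := by
        rw [ascQ]; refine prod_congr rfl fun i _ => ?_; push_cast; ring
      rw [e1] at l1; rw [e2] at l2
      rw [Nat.factorial_succ] at l1 l2
      push_cast at l1 l2
      rw [show m+1+n = n+1+m by omega] at l1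
      linear_combination l1 - l2
    rw [prod_range_succ, hstep, Nat.factorial_succ]
    push_cast
    linear_combination ((n:ℚ)+1) * ih + key

theorem stmt13 (n p : ℕ) :
    (1/(Nat.factorial n : ℚ)) * ∑ k ∈ Finset.range (n+1),
      (rstirling1 0 (n+1) (k+1) : ℚ) * (polyBN k p : ℚ) = (hS p 0 (n+1) : ℚ) := by
  have hn : (Nat.factorial n : ℚ) ≠ 0 := by
    exact_mod_cast Nat.factorial_ne_zero n
  rw [div_mul_eq_mul_div, one_mul, div_eq_iff hn]
  have hpoly : ∀ k, (polyBN k p : ℚ) = ∑ m ∈ range (p+1),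
      (-1:ℚ)^(p+m) * (stirling2 p m : ℚ) * (Nat.factorial m : ℚ) * ((m:ℚ)+1)^k := by
    intro k
    rw [polyBN]
    push_cast
    rw [mul_sum]
    refine sum_congr rfl fun m _ => ?_
    rw [pow_add]
    ring
  have lhs : ∑ k ∈ range (n+1), (rstirling1 0 (n+1) (k+1):ℚ) * (polyBN k p : ℚ)
      = ∑ m ∈ range (p+1), (-1:ℚ)^(p+m) * (stirling2 p m : ℚ) *
          ((Nat.factorial m : ℚ) * ∏ i ∈ range n, ((m:ℚ)+2+i)) := by
    calc ∑ k ∈ range (n+1), (rstirling1 0 (n+1) (k+1):ℚ) * (polyBN k p : ℚ)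
        = ∑ k ∈ range (n+1), ∑ m ∈ range (p+1),
            (-1:ℚ)^(p+m) * (stirling2 p m : ℚ) * (Nat.factorial m : ℚ) *
              ((rstirling1 0 (n+1) (k+1):ℚ) * ((m:ℚ)+1)^k) := by
          refine sum_congr rfl fun k _ => ?_
          rw [hpoly k, mul_sum]
          exact sum_congr rfl fun m _ => by ring
      _ = ∑ m ∈ range (p+1), (-1:ℚ)^(p+m) * (stirling2 p m : ℚ) * (Nat.factorial m : ℚ) *
            ∑ k ∈ range (n+1), (rstirling1 0 (n+1) (k+1):ℚ) * ((m:ℚ)+1)^k := by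
          rw [sum_comm]
          exact sum_congr rfl fun m _ => by rw [mul_sum]
      _ = ∑ m ∈ range (p+1), (-1:ℚ)^(p+m) * (stirling2 p m : ℚ) *
            ((Nat.factorial m : ℚ) * ∏ i ∈ range n, ((m:ℚ)+2+i)) := by
          refine sum_congr rfl fun m _ => ?_
          rw [lemA n ((m:ℚ)+1)]
          rw [show (∏ i ∈ range n, ((m:ℚ)+1 + (i+1))) = ∏ i ∈ range n, ((m:ℚ)+2+i) from
            prod_congr rfl fun i _ => by ring]
          ring
  rw [lhs]
  have hRHS : (hS p 0 (n+1) : ℚ) = ∑ j ∈ Icc 1 (n+1), (j:ℚ)^p := by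
    have : hS p 0 (n+1) = ∑ k ∈ Icc 1 (n+1), k^p := rfl
    rw [this]
    push_cast
    rfl
  rw [hRHS]
  calc ∑ m ∈ range (p+1), (-1:ℚ)^(p+m) * (stirling2 p m : ℚ) *
          ((Nat.factorial m : ℚ) * ∏ i ∈ range n, ((m:ℚ)+2+i))
      = ∑ m ∈ range (p+1), ∑ j ∈ Icc 1 (n+1),
          (-1:ℚ)^(p+m) * (stirling2 p m : ℚ) * ascQ (j:ℚ) m * (Nat.factorial n : ℚ) := by
        refine sum_congr rfl fun m _ => ?_
        rw [lemB m n, mul_sum, mul_sum]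
        exact sum_congr rfl fun j _ => by ring
    _ = ∑ j ∈ Icc 1 (n+1), ∑ m ∈ range (p+1),
          (-1:ℚ)^(p+m) * (stirling2 p m : ℚ) * ascQ (j:ℚ) m * (Nat.factorial n : ℚ) := sum_comm
    _ = ∑ j ∈ Icc 1 (n+1), (j:ℚ)^p * (Nat.factorial n : ℚ) := by
        refine sum_congr rfl fun j _ => ?_
        rw [lemC p (j:ℚ), sum_mul]
    _ = (∑ j ∈ Icc 1 (n+1), (j:ℚ)^p) * (Nat.factorial n : ℚ) := (sum_mul _ _ _).symm
end

section
/- For all positive integers n, q: S_{q-1}(n) = sum_{k=0}^q (-1)^k * S_{n+1}(q+n+1, k+n+1) * k! * h_n^{(k+1)}, where S_{n+1} denotes (n+1)-Stirling numbers of the second kind and h_n^{(k+1)} are hyperharmonic numbers. -/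
open Finset

lemma hyperh_zero_right (r : ℕ) : hyperh r 0 = 0 := by
  cases r <;> simp [hyperh]

lemma hyperh_succ (r n : ℕ) : hyperh (r+1) (n+1) = hyperh (r+1) n + hyperh r (n+1) := by
  show (∑ k ∈ Icc 1 (n+1), hyperh r k) = (∑ k ∈ Icc 1 n, hyperh r k) + hyperh r (n+1)
  rw [Finset.sum_Icc_succ_top (by omega : 1 ≤ n+1)]

lemma hyperh_one_right (r : ℕ) : hyperh (r+1) 1 = 1 := by
  induction r with
  | zero =>
    show (∑ k ∈ Icc 1 1, hyperh 0 k) = 1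
    simp [hyperh]
  | succ r ih =>
    show (∑ k ∈ Icc 1 1, hyperh (r+1) k) = 1
    simpa using ih
lemma key1 (k : ℕ) : ∀ n : ℕ, ((n:ℚ)+1) * hyperh (k+1) (n+1) - ((n:ℚ)+(k:ℚ)+1) * hyperh (k+1) n
    = ((n+k).choose k : ℚ) := by
  induction k with
  | zero =>
    intro n
    have h0 : hyperh 0 (n+1) = 1/((n:ℚ)+1) := by
      simp [hyperh]
    have hne : ((n:ℚ)+1) ≠ 0 := by positivity
    rw [hyperh_succ, h0]
    simp
    field_simp
    ring
  | succ k ihk =>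
    intro n
    induction n with
    | zero =>
      simp [hyperh_one_right, hyperh_zero_right]
    | succ n ihn =>
      have h1 := ihk (n+1)
      have hY2 := hyperh_succ (k+1) (n+1)
      have hY1 := hyperh_succ (k+1) n
      have hP : ((n+1+(k+1)).choose (k+1) : ℚ)
          = ((n+1+k).choose k : ℚ) + ((n+(k+1)).choose (k+1) : ℚ) := by
        have e1 : n+1+(k+1) = (n+k+1)+1 := by omega
        have e2 : n+1+k = n+k+1 := by omega
        have e3 : n+(k+1) = n+k+1 := by omega
        rw [e1, e2, e3, Nat.choose_succ_succ]
        push_cast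
        ring
      push_cast at h1 ihn hP ⊢
      linear_combination ihn + h1 + ((n:ℚ)+2) * hY2 - ((n:ℚ)+(k:ℚ)+2) * hY1 - hP
/-- Auxiliary sums. -/
def gfun (n j k : ℕ) : ℚ := ∑ i ∈ Finset.range n, ((n:ℚ) - (i:ℚ))^j * ((i+k).choose k : ℚ)

lemma key2 (k : ℕ) : ∀ n : ℕ, ((k:ℚ)+(n:ℚ)+1) * hyperh (k+1) n - ((k:ℚ)+1) * hyperh (k+2) n
    = gfun n 0 k := by
  intro n
  induction n with
  | zero => simp [hyperh_zero_right, gfun]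
  | succ n ihn =>
    have h1 := key1 k n
    have hX := hyperh_succ k n
    have hY := hyperh_succ (k+1) n
    have hg : gfun (n+1) 0 k = gfun n 0 k + ((n+k).choose k : ℚ) := by
      unfold gfun
      rw [Finset.sum_range_succ]
      simp
    rw [hg]
    push_cast at h1 ihn ⊢
    linear_combination ihn + h1 - ((k:ℚ)+1) * hY
lemma gstep (n j k : ℕ) :
    ((k:ℚ)+(n:ℚ)+1) * gfun n j k - ((k:ℚ)+1) * gfun n j (k+1) = gfun n (j+1) k := by
  unfold gfun
  rw [Finset.mul_sum, Finset.mul_sum, ← Finset.sum_sub_distrib]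
  apply Finset.sum_congr rfl
  intro i hi
  simp only [Finset.mem_range] at hi
  have hb : ((i:ℚ)+(k:ℚ)+1) * ((i+k).choose k : ℚ) = (((i+k)+1).choose (k+1) : ℚ) * ((k:ℚ)+1) := by
    exact_mod_cast congrArg (Nat.cast : ℕ → ℚ) (Nat.add_one_mul_choose_eq (i+k) k)
  have e : i + (k+1) = (i+k)+1 := by omega
  rw [e]
  linear_combination ((n:ℚ) - (i:ℚ))^j * hb
lemma rstirling2_eq_zero (r : ℕ) : ∀ q k : ℕ, q < k → rstirling2 r q k = 0 := by
  intro q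
  induction q with
  | zero =>
    intro k hk
    match k, hk with
    | k+1, _ => rfl
  | succ q ih =>
    intro k hk
    match k, hk with
    | k+1, hk =>
      show (k+1+r) * rstirling2 r q (k+1) + rstirling2 r q k = 0
      rw [ih (k+1) (by omega), ih k (by omega)]
      ring

lemma sum_step (r q : ℕ) (f : ℕ → ℚ) :
    ∑ k ∈ range (q+2), (rstirling2 r (q+1) k : ℚ) * f k
    = ∑ k ∈ range (q+1), (rstirling2 r q k : ℚ) * (((k:ℚ)+(r:ℚ)) * f k + f (k+1)) := by
  rw [Finset.sum_range_succ' (fun k => (rstirling2 r (q+1) k : ℚ) * f k) (q+1)]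
  have h0 : (rstirling2 r (q+1) 0 : ℚ) * f 0 = (r:ℚ) * (rstirling2 r q 0 : ℚ) * f 0 := by
    show ((r * rstirling2 r q 0 : ℕ) : ℚ) * f 0 = _
    push_cast
    ring
  have hterm : ∀ k, (rstirling2 r (q+1) (k+1) : ℚ) * f (k+1)
      = (((k:ℚ)+1+(r:ℚ)) * (rstirling2 r q (k+1) : ℚ) + (rstirling2 r q k : ℚ)) * f (k+1) := by
    intro k
    show (((k+1+r) * rstirling2 r q (k+1) + rstirling2 r q k : ℕ) : ℚ) * f (k+1) = _
    push_cast
    ring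
  rw [h0]
  conv_lhs => rw [Finset.sum_congr rfl (fun k _ => hterm k)]
  -- RHS manipulation
  conv_rhs =>
    rw [show (fun k => (rstirling2 r q k : ℚ) * (((k:ℚ)+(r:ℚ)) * f k + f (k+1))) = fun k =>
      ((rstirling2 r q k : ℚ) * ((k:ℚ)+(r:ℚ)) * f k + (rstirling2 r q k : ℚ) * f (k+1)) from
      funext fun k => by ring]
  rw [Finset.sum_add_distrib]
  rw [Finset.sum_range_succ' (fun k => (rstirling2 r q k : ℚ) * ((k:ℚ)+(r:ℚ)) * f k) q]
  have hz : (rstirling2 r q (q+1) : ℚ) = 0 := by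
    rw [rstirling2_eq_zero r q (q+1) (by omega)]
    simp
  rw [show (∑ k ∈ range (q+1), (((k:ℚ)+1+(r:ℚ)) * (rstirling2 r q (k+1) : ℚ)
        + (rstirling2 r q k : ℚ)) * f (k+1))
      = ∑ k ∈ range (q+1), ((((k:ℚ)+1+(r:ℚ)) * (rstirling2 r q (k+1) : ℚ)) * f (k+1)
        + (rstirling2 r q k : ℚ) * f (k+1)) from
    Finset.sum_congr rfl fun k _ => by ring]
  rw [Finset.sum_add_distrib]
  rw [Finset.sum_range_succ (fun k => (((k:ℚ)+1+(r:ℚ)) * (rstirling2 r q (k+1) : ℚ)) * f (k+1)) q]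
  rw [hz]
  rw [show (∑ x ∈ range q, (((x:ℚ)+1+(r:ℚ)) * (rstirling2 r q (x+1) : ℚ)) * f (x+1))
      = ∑ x ∈ range q, (rstirling2 r q (x+1) : ℚ) * ((x:ℚ)+1+(r:ℚ)) * f (x+1) from
    Finset.sum_congr rfl fun x _ => by ring]
  push_cast
  ring
lemma iter (n : ℕ) : ∀ s j : ℕ,
    ∑ k ∈ range (s+1), (rstirling2 (n+1) s k : ℚ) * ((-1:ℚ)^k * (Nat.factorial k : ℚ) * gfun n j k)
    = gfun n (j+s) 0 := by
  intro s
  induction s with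
  | zero =>
    intro j
    rw [Finset.sum_range_one]
    simp [show rstirling2 (n+1) 0 0 = 1 from rfl]
  | succ s ih =>
    intro j
    rw [sum_step (n+1) s (fun k => (-1:ℚ)^k * (Nat.factorial k : ℚ) * gfun n j k)]
    rw [show (∑ k ∈ range (s+1), (rstirling2 (n+1) s k : ℚ) *
          (((k:ℚ)+((n+1:ℕ):ℚ)) * ((-1:ℚ)^k * (Nat.factorial k : ℚ) * gfun n j k)
            + (-1:ℚ)^(k+1) * (Nat.factorial (k+1) : ℚ) * gfun n j (k+1)))
        = ∑ k ∈ range (s+1), (rstirling2 (n+1) s k : ℚ) *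
          ((-1:ℚ)^k * (Nat.factorial k : ℚ) * gfun n (j+1) k) from
      Finset.sum_congr rfl fun k _ => by
        have hg := gstep n j k
        push_cast [Nat.factorial_succ]
        linear_combination (rstirling2 (n+1) s k : ℚ) * (-1:ℚ)^k * (Nat.factorial k : ℚ) * hg]
    rw [ih (j+1)]
    congr 1
    omega

lemma gfun_k_zero (n j : ℕ) : gfun n j 0 = (hS j 0 n : ℚ) := by
  have h1 : (hS j 0 n : ℚ) = ∑ i ∈ range n, ((1+i:ℕ):ℚ)^j := by
    show ((∑ k ∈ Icc 1 n, k^j : ℕ) : ℚ) = _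
    rw [← Finset.Ico_add_one_right_eq_Icc, Finset.sum_Ico_eq_sum_range]

    push_cast
    apply Finset.sum_congr
    · norm_num
    · intro i _; norm_num
  rw [h1, ← Finset.sum_range_reflect (fun i => ((1+i:ℕ):ℚ)^j) n]
  unfold gfun
  apply Finset.sum_congr rfl
  intro i hi
  simp only [Finset.mem_range] at hi
  rw [Nat.choose_zero_right]
  have e : 1 + (n-1-i) = n - i := by omega
  rw [e, Nat.cast_sub hi.le]
  ring

theorem stmt15 (n q : ℕ) (hn : 0 < n) (hq : 0 < q) :
    (hS (q-1) 0 n : ℚ) = ∑ k ∈ Finset.range (q+1),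
      (-1:ℚ)^k * (rstirling2 (n+1) q k : ℚ) * (Nat.factorial k : ℚ) * hyperh (k+1) n := by
  obtain ⟨s, rfl⟩ : ∃ s, q = s+1 := ⟨q-1, by omega⟩
  simp only [Nat.add_sub_cancel]
  rw [show (∑ k ∈ Finset.range (s+1+1),
        (-1:ℚ)^k * (rstirling2 (n+1) (s+1) k : ℚ) * (Nat.factorial k : ℚ) * hyperh (k+1) n)
      = ∑ k ∈ Finset.range (s+2),
        (rstirling2 (n+1) (s+1) k : ℚ) * ((-1:ℚ)^k * (Nat.factorial k : ℚ) * hyperh (k+1) n) from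
    Finset.sum_congr rfl fun k _ => by ring]
  rw [sum_step (n+1) s (fun k => (-1:ℚ)^k * (Nat.factorial k : ℚ) * hyperh (k+1) n)]
  rw [show (∑ k ∈ range (s+1), (rstirling2 (n+1) s k : ℚ) *
        (((k:ℚ)+((n+1:ℕ):ℚ)) * ((-1:ℚ)^k * (Nat.factorial k : ℚ) * hyperh (k+1) n)
          + (-1:ℚ)^(k+1) * (Nat.factorial (k+1) : ℚ) * hyperh (k+1+1) n))
      = ∑ k ∈ range (s+1), (rstirling2 (n+1) s k : ℚ) *
        ((-1:ℚ)^k * (Nat.factorial k : ℚ) * gfun n 0 k) from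
    Finset.sum_congr rfl fun k _ => by
      have h2 := key2 k n
      push_cast [Nat.factorial_succ]
      linear_combination (rstirling2 (n+1) s k : ℚ) * (-1:ℚ)^k * (Nat.factorial k : ℚ) * h2]
  rw [iter n s 0, gfun_k_zero]
  norm_num
end
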